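/- Let U, V, X, Y1, Y2 be finitely-valued random variables, with X, Y1, Y2 Boolean-valued, such that (Y1,Y2) is conditionally independent of (U,V) given X and, conditionally on X, (Y1,Y2) is distributed according to the BSSC with p = 1/2. If min{P(X=0), P(X=1)} ≤ 1/5, then I(U;Y1) + I(V;Y2) − I(U;V) ≤ max{I(X;Y1), I(X;Y2)}. -/

import Mathlib

open MeasureTheory Real

noncomputable def prob {Ω : Type*} [MeasurableSpace Ω] (μ : Measure Ω) {A : Type*}
    (X : Ω → A) (a : A) : ℝ :=
  (μ (X ⁻¹' {a})).toReal

noncomputable def entropy {Ω : Type*} [MeasurableSpace Ω] (μ : Measure Ω) {A : Type*}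
    [Fintype A] (X : Ω → A) : ℝ :=
  ∑ a, Real.negMulLog (prob μ X a)

noncomputable def mutualInfo {Ω : Type*} [MeasurableSpace Ω] (μ : Measure Ω)
    {A B : Type*} [Fintype A] [Fintype B] (X : Ω → A) (Y : Ω → B) : ℝ :=
  entropy μ X + entropy μ Y - entropy μ (fun ω => (X ω, Y ω))

noncomputable def condMutualInfo {Ω : Type*} [MeasurableSpace Ω] (μ : Measure Ω)
    {A B C : Type*} [Fintype A] [Fintype B] [Fintype C]
    (X : Ω → A) (Y : Ω → B) (Z : Ω → C) : ℝ :=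
  entropy μ (fun ω => (X ω, Z ω)) + entropy μ (fun ω => (Y ω, Z ω))
    - entropy μ (fun ω => (X ω, Y ω, Z ω)) - entropy μ Z

/-- `W` and `Y` are conditionally independent given `X` (Markov chain `W → X → Y`). -/
def CondIndepGiven {Ω : Type*} [MeasurableSpace Ω] (μ : Measure Ω) {A B C : Type*}
    (W : Ω → A) (X : Ω → B) (Y : Ω → C) : Prop :=
  ∀ a b c, prob μ (fun ω => (W ω, X ω, Y ω)) (a, b, c) * prob μ X b
    = prob μ (fun ω => (W ω, X ω)) (a, b) * prob μ (fun ω => (X ω, Y ω)) (b, c)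

noncomputable def bsscK (x y1 y2 : Bool) : ℝ :=
  if x = false then (if y2 = false then 1 / 2 else 0)
  else (if y1 = true then 1 / 2 else 0)

def IsBSSC {Ω : Type*} [MeasurableSpace Ω] (μ : Measure Ω) (X Y1 Y2 : Ω → Bool) : Prop :=
  ∀ x y1 y2, prob μ (fun ω => (X ω, Y1 ω, Y2 ω)) (x, y1, y2) = prob μ X x * bsscK x y1 y2

noncomputable def binH (x : ℝ) : ℝ := Real.negMulLog x + Real.negMulLog (1 - x)

noncomputable def fskew (η : ℝ) : ℝ := binH (η / 2) - binH ((1 - η) / 2)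


section Basic
variable {Ω : Type*} [MeasurableSpace Ω] (μ : Measure Ω) [IsProbabilityMeasure μ]
set_option linter.unusedSectionVars false

lemma prob_nonneg {A : Type*} (X : Ω → A) (a : A) : 0 ≤ prob μ X a := ENNReal.toReal_nonneg

lemma prob_congr {A B : Type*} {X : Ω → A} {Y : Ω → B} {a : A} {b : B}
    (h : ∀ ω, X ω = a ↔ Y ω = b) : prob μ X a = prob μ Y b := by
  unfold prob
  have : X ⁻¹' {a} = Y ⁻¹' {b} := by ext ω; simpa using h ω
  rw [this]

/-- Marginalization. -/
lemma prob_comp_eq_sum {A B : Type*} [Fintype A] [MeasurableSpace A]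
    [MeasurableSingletonClass A] [DecidableEq A] [DecidableEq B] (X : Ω → A) (hX : Measurable X)
    (g : A → B) (b : B) :
    prob μ (fun ω => g (X ω)) b = ∑ a, if g a = b then prob μ X a else 0 := by
  have hset : (fun ω => g (X ω)) ⁻¹' {b} = ⋃ a ∈ Finset.univ.filter (fun a => g a = b), X ⁻¹' {a} := by
    ext ω
    simp [eq_comm]
  have hdisj : Set.PairwiseDisjoint (↑(Finset.univ.filter (fun a => g a = b)))
      (fun a => X ⁻¹' ({a} : Set A)) := by
    intro x _ y _ hxy
    apply Set.disjoint_left.2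
    intro ω h1 h2
    exact hxy (by simp at h1 h2; rw [← h1, ← h2])
  rw [prob, hset, measure_biUnion_finset hdisj (fun a _ => hX (measurableSet_singleton a)),
    ENNReal.toReal_sum (fun a _ => (measure_lt_top μ _).ne), ← Finset.sum_filter]
  rfl

lemma sum_prob_eq_one {A : Type*} [Fintype A] [MeasurableSpace A]
    [MeasurableSingletonClass A] [DecidableEq A] (X : Ω → A) (hX : Measurable X) :
    ∑ a, prob μ X a = 1 := by
  classical
  have := prob_comp_eq_sum μ X hX (fun _ => ()) ()
  simpa [prob] using this.symm

lemma prob_fst_le {A B : Type*} (X : Ω → A) (Y : Ω → B) (a : A) (b : B) :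
    prob μ (fun ω => (Y ω, X ω)) (b, a) ≤ prob μ X a := by
  unfold prob
  refine ENNReal.toReal_mono (measure_lt_top μ _).ne (measure_mono ?_)
  intro ω h
  simp only [Set.mem_preimage, Set.mem_singleton_iff, Prod.mk.injEq] at h ⊢
  exact h.2

lemma entropy_map_eq {A B : Type*} [Fintype A] [Fintype B] {X : Ω → A} {Y : Ω → B}
    (e : A ≃ B) (h : ∀ ω, Y ω = e (X ω)) : entropy μ Y = entropy μ X := by
  unfold entropy
  rw [← Equiv.sum_comp e]
  refine Finset.sum_congr rfl fun a _ => ?_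
  congr 1
  exact prob_congr μ (fun ω => by rw [h ω]; exact ⟨fun hh => e.injective hh, fun hh => by rw [hh]⟩)

end Basic


lemma sum_ite_const {α β : Type*} [Fintype α] [AddCommMonoid β] (c : Prop) [Decidable c]
    (f : α → β) : ∑ x, (if c then f x else 0) = if c then ∑ x, f x else 0 := by
  split <;> simp

lemma gibbs_pointwise {p pc pd pe : ℝ} (hp : 0 ≤ p) (hpc : p ≤ pc) (hpd : p ≤ pd) (hpe : p ≤ pe)
    (hc : 0 ≤ pc) (hd : 0 ≤ pd) (he : 0 ≤ pe) :
    p - pc * pd / pe ≤ p * (log p + log pe - log pc - log pd) := by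
  rcases eq_or_lt_of_le hp with h0 | hp0
  · rw [← h0]
    simp only [zero_mul, zero_sub, neg_nonpos, zero_mul]
    positivity
  · have hpc0 : 0 < pc := lt_of_lt_of_le hp0 hpc
    have hpd0 : 0 < pd := lt_of_lt_of_le hp0 hpd
    have hpe0 : 0 < pe := lt_of_lt_of_le hp0 hpe
    have hx : (0:ℝ) < pc * pd / (p * pe) := by positivity
    have hlog := Real.log_le_sub_one_of_pos hx
    have hexp : log (pc * pd / (p * pe)) = log pc + log pd - log p - log pe := by
      rw [Real.log_div (by positivity) (by positivity), Real.log_mul hpc0.ne' hpd0.ne',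
        Real.log_mul hp0.ne' hpe0.ne']
      ring
    rw [hexp] at hlog
    have h2 := mul_le_mul_of_nonneg_left hlog hp
    have hps : p * (pc * pd / (p * pe)) = pc * pd / pe := by
      field_simp
    nlinarith [h2, hps]

/-- Discrete submodularity of entropy (Gibbs): `H(C,E)+H(D,E) ≥ H(C,D,E)+H(E)`. -/
lemma gibbs_sum {C D E : Type*} [Fintype C] [Fintype D] [Fintype E]
    (p : C → D → E → ℝ) (hp : ∀ c d e, 0 ≤ p c d e) :
    (∑ c, ∑ d, ∑ e, negMulLog (p c d e)) + ∑ e, negMulLog (∑ c, ∑ d, p c d e)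
      ≤ (∑ c, ∑ e, negMulLog (∑ d, p c d e)) + ∑ d, ∑ e, negMulLog (∑ c, p c d e) := by
  classical
  set pc : C → E → ℝ := fun c e => ∑ d, p c d e with hpc_def
  set pd : D → E → ℝ := fun d e => ∑ c, p c d e with hpd_def
  set pe : E → ℝ := fun e => ∑ c, ∑ d, p c d e with hpe_def
  have hple_c : ∀ c d e, p c d e ≤ pc c e := fun c d e =>
    Finset.single_le_sum (fun d _ => hp c d e) (Finset.mem_univ d)
  have hple_d : ∀ c d e, p c d e ≤ pd d e := fun c d e =>
    Finset.single_le_sum (fun c _ => hp c d e) (Finset.mem_univ c)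
  have hpc_nonneg : ∀ c e, 0 ≤ pc c e := fun c e => Finset.sum_nonneg fun d _ => hp c d e
  have hpd_nonneg : ∀ d e, 0 ≤ pd d e := fun d e => Finset.sum_nonneg fun c _ => hp c d e
  have hpe_nonneg : ∀ e, 0 ≤ pe e := fun e =>
    Finset.sum_nonneg fun c _ => Finset.sum_nonneg fun d _ => hp c d e
  have hsum_pc : ∀ e, ∑ c, pc c e = pe e := fun e => rfl
  have hsum_pd : ∀ e, ∑ d, pd d e = pe e := fun e => Finset.sum_comm
  have hple_e : ∀ c d e, p c d e ≤ pe e := fun c d e =>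
    le_trans (hple_c c d e)
      ((hsum_pc e) ▸ Finset.single_le_sum (fun c _ => hpc_nonneg c e) (Finset.mem_univ c))
  -- Express all four entropy sums as triple sums over (c,d,e)
  have h1 : ∀ c e, negMulLog (pc c e) = ∑ d, -(p c d e * log (pc c e)) := by
    intro c e
    rw [Finset.sum_neg_distrib, ← Finset.sum_mul]
    show negMulLog (pc c e) = -(pc c e * log (pc c e))
    rw [Real.negMulLog, neg_mul]
  have h2 : ∀ d e, negMulLog (pd d e) = ∑ c, -(p c d e * log (pd d e)) := by
    intro d e
    rw [Finset.sum_neg_distrib, ← Finset.sum_mul]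
    show negMulLog (pd d e) = -(pd d e * log (pd d e))
    rw [Real.negMulLog, neg_mul]
  have h3 : ∀ e, negMulLog (pe e) = ∑ c, ∑ d, -(p c d e * log (pe e)) := by
    intro e
    simp only [Finset.sum_neg_distrib, ← Finset.sum_mul]
    show negMulLog (pe e) = -(pe e * log (pe e))
    rw [Real.negMulLog, neg_mul]
  -- the key nonnegative quantity
  have key : 0 ≤ ∑ c, ∑ d, ∑ e,
      p c d e * (log (p c d e) + log (pe e) - log (pc c e) - log (pd d e)) := by
    have step1 : ∑ c, ∑ d, ∑ e, (p c d e - pc c e * pd d e / pe e)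
        ≤ ∑ c, ∑ d, ∑ e,
          p c d e * (log (p c d e) + log (pe e) - log (pc c e) - log (pd d e)) := by
      refine Finset.sum_le_sum fun c _ => Finset.sum_le_sum fun d _ => Finset.sum_le_sum fun e _ => ?_
      exact gibbs_pointwise (hp c d e) (hple_c c d e) (hple_d c d e) (hple_e c d e)
        (hpc_nonneg c e) (hpd_nonneg d e) (hpe_nonneg e)
    refine le_trans ?_ step1
    -- ∑ (p - pc*pd/pe) ≥ 0
    have hq : ∑ c, ∑ d, ∑ e, (pc c e * pd d e / pe e) ≤ ∑ c, ∑ d, ∑ e, p c d e := by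
      have sw : ∀ (f : C → D → E → ℝ), ∑ c, ∑ d, ∑ e, f c d e = ∑ e, ∑ c, ∑ d, f c d e := by
        intro f
        rw [show (∑ c, ∑ d, ∑ e, f c d e) = ∑ c, ∑ e, ∑ d, f c d e from
          Finset.sum_congr rfl fun c _ => Finset.sum_comm]
        exact Finset.sum_comm
      rw [sw, sw]
      refine Finset.sum_le_sum fun e _ => ?_
      have hc1 : ∀ c, ∑ d, pc c e * pd d e / pe e = pc c e * pe e / pe e := by
        intro c
        rw [← Finset.sum_div, ← Finset.mul_sum, hsum_pd]
      calc ∑ c, ∑ d, pc c e * pd d e / pe e = ∑ c, pc c e * pe e / pe e := by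
            exact Finset.sum_congr rfl fun c _ => hc1 c
        _ = (∑ c, pc c e) * pe e / pe e := by rw [← Finset.sum_div, ← Finset.sum_mul]
        _ = pe e * pe e / pe e := by rw [hsum_pc]
        _ ≤ pe e := by
            rcases eq_or_lt_of_le (hpe_nonneg e) with h0 | h0
            · rw [← h0]; simp
            · rw [mul_div_assoc, div_self h0.ne', mul_one]
        _ = ∑ c, ∑ d, p c d e := rfl
    have := Finset.sum_le_sum (s := (Finset.univ : Finset C)) fun c (_ : c ∈ Finset.univ) =>
      Finset.sum_le_sum (s := (Finset.univ : Finset D)) fun d (_ : d ∈ Finset.univ) =>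
        Finset.sum_le_sum (s := (Finset.univ : Finset E)) fun e (_ : e ∈ Finset.univ) =>
          sub_le_sub_left (le_refl (pc c e * pd d e / pe e)) (p c d e)
    -- ∑ (p - pc*pd/pe) = ∑ p - ∑ pc*pd/pe ≥ 0
    have hsplit : ∑ c, ∑ d, ∑ e, (p c d e - pc c e * pd d e / pe e)
        = (∑ c, ∑ d, ∑ e, p c d e) - ∑ c, ∑ d, ∑ e, (pc c e * pd d e / pe e) := by
      simp [Finset.sum_sub_distrib]
    rw [hsplit]
    linarith
  -- now convert goal to the key sum
  rw [show (∑ c, ∑ e, negMulLog (∑ d, p c d e)) = ∑ c, ∑ e, ∑ d, -(p c d e * log (pc c e)) from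
      Finset.sum_congr rfl fun c _ => Finset.sum_congr rfl fun e _ => h1 c e,
    show (∑ d, ∑ e, negMulLog (∑ c, p c d e)) = ∑ d, ∑ e, ∑ c, -(p c d e * log (pd d e)) from
      Finset.sum_congr rfl fun d _ => Finset.sum_congr rfl fun e _ => h2 d e,
    show (∑ e, negMulLog (∑ c, ∑ d, p c d e)) = ∑ e, ∑ c, ∑ d, -(p c d e * log (pe e)) from
      Finset.sum_congr rfl fun e _ => h3 e]
  have sw1 : ∀ (f : C → D → E → ℝ), ∑ c, ∑ e, ∑ d, f c d e = ∑ c, ∑ d, ∑ e, f c d e :=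
    fun f => Finset.sum_congr rfl fun c _ => Finset.sum_comm
  have sw2 : ∀ (f : C → D → E → ℝ), ∑ d, ∑ e, ∑ c, f c d e = ∑ c, ∑ d, ∑ e, f c d e := by
    intro f
    rw [show (∑ d, ∑ e, ∑ c, f c d e) = ∑ d, ∑ c, ∑ e, f c d e from
      Finset.sum_congr rfl fun d _ => Finset.sum_comm]
    exact Finset.sum_comm
  have sw3 : ∀ (f : C → D → E → ℝ), ∑ e, ∑ c, ∑ d, f c d e = ∑ c, ∑ d, ∑ e, f c d e := by
    intro f
    rw [Finset.sum_comm]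
    exact Finset.sum_congr rfl fun c _ => Finset.sum_comm
  rw [sw1 (fun c d e => -(p c d e * log (pc c e))), sw2 (fun c d e => -(p c d e * log (pd d e))),
    sw3 (fun c d e => -(p c d e * log (pe e)))]
  have hdiff : (∑ c, ∑ d, ∑ e, -(p c d e * log (pc c e))) + (∑ c, ∑ d, ∑ e, -(p c d e * log (pd d e)))
      - ((∑ c, ∑ d, ∑ e, negMulLog (p c d e)) + ∑ c, ∑ d, ∑ e, -(p c d e * log (pe e)))
      = ∑ c, ∑ d, ∑ e, p c d e * (log (p c d e) + log (pe e) - log (pc c e) - log (pd d e)) := by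
    simp only [← Finset.sum_add_distrib, ← Finset.sum_sub_distrib]
    refine Finset.sum_congr rfl fun c _ => Finset.sum_congr rfl fun d _ =>
      Finset.sum_congr rfl fun e _ => ?_
    rw [negMulLog]
    ring
  linarith



section Basic2
variable {Ω : Type*} [MeasurableSpace Ω] (μ : Measure Ω) [IsProbabilityMeasure μ]
set_option linter.unusedSectionVars false

lemma prob_le_of_imp {A B : Type*} (Z : Ω → A) (W : Ω → B) (c : A) (d : B)
    (h : ∀ ω, Z ω = c → W ω = d) : prob μ Z c ≤ prob μ W d := by
  unfold prob
  exact ENNReal.toReal_mono (measure_lt_top μ _).ne (measure_mono (fun ω hω => h ω hω))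

/-- Submodularity of entropy: `H(Z,W,T) + H(T) ≤ H(Z,T) + H(W,T)`. -/
lemma submod {C D E : Type*} [Fintype C] [Fintype D] [Fintype E]
    [MeasurableSpace C] [MeasurableSingletonClass C]
    [MeasurableSpace D] [MeasurableSingletonClass D]
    [MeasurableSpace E] [MeasurableSingletonClass E]
    (Z : Ω → C) (W : Ω → D) (T : Ω → E)
    (hZ : Measurable Z) (hW : Measurable W) (hT : Measurable T) :
    entropy μ (fun ω => (Z ω, W ω, T ω)) + entropy μ T
      ≤ entropy μ (fun ω => (Z ω, T ω)) + entropy μ (fun ω => (W ω, T ω)) := by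
  classical
  set p : C → D → E → ℝ := fun c d e => prob μ (fun ω => (Z ω, W ω, T ω)) (c, d, e) with hp
  have hmeas : Measurable (fun ω => (Z ω, W ω, T ω)) := hZ.prodMk (hW.prodMk hT)
  have hZT : ∀ c e, prob μ (fun ω => (Z ω, T ω)) (c, e) = ∑ d, p c d e := by
    intro c e
    have := prob_comp_eq_sum μ (fun ω => (Z ω, W ω, T ω)) hmeas
      (fun z => (z.1, z.2.2)) (c, e)
    rw [show (fun ω => (Z ω, T ω))
      = (fun ω => ((fun z : C × D × E => (z.1, z.2.2)) ((Z ω, W ω, T ω)))) from rfl, this]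
    rw [Fintype.sum_prod_type]
    simp [Prod.ext_iff, Fintype.sum_prod_type, Finset.sum_ite_eq, ite_and]
    rfl
  have hWT : ∀ d e, prob μ (fun ω => (W ω, T ω)) (d, e) = ∑ c, p c d e := by
    intro d e
    have := prob_comp_eq_sum μ (fun ω => (Z ω, W ω, T ω)) hmeas
      (fun z => (z.2.1, z.2.2)) (d, e)
    rw [show (fun ω => (W ω, T ω))
      = (fun ω => ((fun z : C × D × E => (z.2.1, z.2.2)) ((Z ω, W ω, T ω)))) from rfl, this]
    rw [Fintype.sum_prod_type]
    simp [Prod.ext_iff, Fintype.sum_prod_type, Finset.sum_ite_eq, ite_and]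
    rfl
  have hTT : ∀ e, prob μ T e = ∑ c, ∑ d, p c d e := by
    intro e
    have := prob_comp_eq_sum μ (fun ω => (Z ω, W ω, T ω)) hmeas
      (fun z => z.2.2) e
    rw [show T = (fun ω => ((fun z : C × D × E => z.2.2) ((Z ω, W ω, T ω)))) from rfl, this]
    rw [Fintype.sum_prod_type]
    simp [Fintype.sum_prod_type, Finset.sum_ite_eq, ite_and]
    rfl
  have e3 : entropy μ (fun ω => (Z ω, W ω, T ω)) = ∑ c, ∑ d, ∑ e, negMulLog (p c d e) := by
    rw [entropy, Fintype.sum_prod_type]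
    refine Finset.sum_congr rfl fun c _ => ?_
    rw [Fintype.sum_prod_type]
  have eT : entropy μ T = ∑ e, negMulLog (∑ c, ∑ d, p c d e) := by
    rw [entropy]
    exact Finset.sum_congr rfl fun e _ => by rw [hTT]
  have eZT : entropy μ (fun ω => (Z ω, T ω)) = ∑ c, ∑ e, negMulLog (∑ d, p c d e) := by
    rw [entropy, Fintype.sum_prod_type]
    exact Finset.sum_congr rfl fun c _ => Finset.sum_congr rfl fun e _ => by rw [hZT]
  have eWT : entropy μ (fun ω => (W ω, T ω)) = ∑ d, ∑ e, negMulLog (∑ c, p c d e) := by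
    rw [entropy, Fintype.sum_prod_type]
    exact Finset.sum_congr rfl fun d _ => Finset.sum_congr rfl fun e _ => by rw [hWT]
  rw [e3, eT, eZT, eWT]
  exact gibbs_sum p (fun c d e => ENNReal.toReal_nonneg)

end Basic2


noncomputable def sfun (q : ℝ) : ℝ :=
  (Real.log (2 - q) - Real.log q + Real.log (1 + q) - Real.log (1 - q)) / 2

noncomputable def sder (q : ℝ) : ℝ :=
  (-(2 - q)⁻¹ - q⁻¹ + (1 + q)⁻¹ + (1 - q)⁻¹) / 2

lemma continuous_fskew : Continuous fskew := by
  unfold fskew binH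
  fun_prop

lemma hasDerivAt_fskew {q : ℝ} (h0 : 0 < q) (h1 : q < 1) : HasDerivAt fskew (sfun q) q := by
  have hfs : fskew = fun q : ℝ =>
      negMulLog (q / 2) + negMulLog (1 - q / 2)
        - (negMulLog ((1 - q) / 2) + negMulLog (1 - (1 - q) / 2)) := by
    funext x
    simp [fskew, binH]
  have hne1 : q / 2 ≠ 0 := by positivity
  have hne2 : 1 - q / 2 ≠ 0 := by nlinarith
  have hne3 : (1 - q) / 2 ≠ 0 := by nlinarith
  have hne4 : 1 - (1 - q) / 2 ≠ 0 := by nlinarith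
  have d1 : HasDerivAt (fun x : ℝ => negMulLog (x / 2)) ((-log (q / 2) - 1) * (1 / 2)) q := by
    have := (hasDerivAt_negMulLog hne1).comp q ((hasDerivAt_id q).div_const 2)
    simpa [Function.comp_def] using this
  have d2 : HasDerivAt (fun x : ℝ => negMulLog (1 - x / 2))
      ((-log (1 - q / 2) - 1) * (-(1 / 2))) q := by
    have := (hasDerivAt_negMulLog hne2).comp q
      (((hasDerivAt_id q).div_const 2).const_sub 1)
    simpa [Function.comp_def] using this
  have d3 : HasDerivAt (fun x : ℝ => negMulLog ((1 - x) / 2))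
      ((-log ((1 - q) / 2) - 1) * (-(1 / 2))) q := by
    have h := (hasDerivAt_negMulLog hne3).comp q
      (((hasDerivAt_id q).const_sub 1).div_const 2)
    refine h.congr_deriv ?_
    ring
  have d4 : HasDerivAt (fun x : ℝ => negMulLog (1 - (1 - x) / 2))
      ((-log (1 - (1 - q) / 2) - 1) * (1 / 2)) q := by
    have h := (hasDerivAt_negMulLog hne4).comp q
      ((((hasDerivAt_id q).const_sub 1).div_const 2).const_sub 1)
    refine h.congr_deriv ?_
    ring
  rw [hfs]
  have := (d1.add d2).sub (d3.add d4)
  refine this.congr_deriv ?_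
  have lq1 : log (q / 2) = log q - log 2 := Real.log_div h0.ne' two_ne_zero
  have lq2 : log (1 - q / 2) = log (2 - q) - log 2 := by
    rw [show (1 - q / 2) = (2 - q) / 2 by ring, Real.log_div (by linarith) two_ne_zero]
  have lq3 : log ((1 - q) / 2) = log (1 - q) - log 2 :=
    Real.log_div (by linarith) two_ne_zero
  have lq4 : log (1 - (1 - q) / 2) = log (1 + q) - log 2 := by
    rw [show (1 - (1 - q) / 2) = (1 + q) / 2 by ring, Real.log_div (by linarith) two_ne_zero]
  rw [sfun, lq1, lq2, lq3, lq4]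
  ring

lemma hasDerivAt_sfun {q : ℝ} (h0 : 0 < q) (h1 : q < 1) : HasDerivAt sfun (sder q) q := by
  have e1 : HasDerivAt (fun x : ℝ => log (2 - x)) ((2 - q)⁻¹ * (-1)) q :=
    (Real.hasDerivAt_log (by linarith)).comp q ((hasDerivAt_id q).const_sub 2)
  have e2 : HasDerivAt (fun x : ℝ => log x) q⁻¹ q := Real.hasDerivAt_log h0.ne'
  have e3 : HasDerivAt (fun x : ℝ => log (1 + x)) ((1 + q)⁻¹ * 1) q :=
    (Real.hasDerivAt_log (by linarith)).comp q ((hasDerivAt_id q).const_add 1)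
  have e4 : HasDerivAt (fun x : ℝ => log (1 - x)) ((1 - q)⁻¹ * (-1)) q :=
    (Real.hasDerivAt_log (by linarith)).comp q ((hasDerivAt_id q).const_sub 1)
  have := (((e1.sub e2).add e3).sub e4).div_const 2
  refine this.congr_deriv ?_
  rw [sder]
  ring

lemma sder_nonpos {q : ℝ} (h0 : 0 < q) (h1 : q ≤ 1 / 2) : sder q ≤ 0 := by
  have ha : (0:ℝ) < 2 - q := by linarith
  have hb : (0:ℝ) < 1 + q := by linarith
  have hc : (0:ℝ) < 1 - q := by linarith
  have e1 : (1 + q)⁻¹ + (1 - q)⁻¹ = 2 / ((1 + q) * (1 - q)) := by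
    field_simp
    ring
  have e2 : (2 - q)⁻¹ + q⁻¹ = 2 / (q * (2 - q)) := by
    field_simp
    ring
  have h3 : (0:ℝ) < q * (2 - q) := by positivity
  have h4 : q * (2 - q) ≤ (1 + q) * (1 - q) := by nlinarith
  have h5 := div_le_div_of_nonneg_left (by norm_num : (0:ℝ) ≤ 2) h3 h4
  rw [sder]
  have hN : -(2 - q)⁻¹ - q⁻¹ + (1 + q)⁻¹ + (1 - q)⁻¹ ≤ 0 := by linarith
  linarith

lemma sfun_antitoneOn : AntitoneOn sfun (Set.Ioc 0 (1/2 : ℝ)) := by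
  have hD : Convex ℝ (Set.Ioc 0 (1/2 : ℝ)) := convex_Ioc _ _
  have hint : interior (Set.Ioc 0 (1/2 : ℝ)) = Set.Ioo 0 (1/2 : ℝ) := interior_Ioc
  refine antitoneOn_of_deriv_nonpos hD ?_ ?_ ?_
  · intro x hx
    exact (hasDerivAt_sfun hx.1 (by linarith [hx.2])).continuousAt.continuousWithinAt
  · rw [hint]
    intro x hx
    exact (hasDerivAt_sfun hx.1 (by linarith [hx.2])).differentiableAt.differentiableWithinAt
  · rw [hint]
    intro x hx
    rw [(hasDerivAt_sfun hx.1 (by linarith [hx.2])).deriv]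
    exact sder_nonpos hx.1 (le_of_lt hx.2)

/-- tangent line bound on the concave part -/
lemma fskew_tangent {η q : ℝ} (hη0 : 0 < η) (hη2 : η ≤ 1/2) (hq0 : 0 ≤ q) (hq2 : q ≤ 1/2) :
    fskew q ≤ fskew η + sfun η * (q - η) := by
  rcases lt_trichotomy q η with h | h | h
  · -- q < η : slope on (q,η) is ≥ sfun η
    obtain ⟨c, hc, hc2⟩ := exists_hasDerivAt_eq_slope fskew sfun h
      continuous_fskew.continuousOn
      (fun x hx => hasDerivAt_fskew (lt_of_le_of_lt hq0 hx.1) (by linarith [hx.2]))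
    have hcs : sfun η ≤ sfun c := by
      refine sfun_antitoneOn ⟨lt_of_le_of_lt hq0 hc.1, by linarith [hc.2]⟩ ⟨hη0, hη2⟩
        (le_of_lt hc.2)
    rw [hc2, le_div_iff₀ (by linarith : (0:ℝ) < η - q)] at hcs
    nlinarith [hcs]
  · rw [h]; simp
  · -- η < q
    obtain ⟨c, hc, hc2⟩ := exists_hasDerivAt_eq_slope fskew sfun h
      continuous_fskew.continuousOn
      (fun x hx => hasDerivAt_fskew (lt_trans hη0 hx.1) (by linarith [hx.2]))
    have hcs : sfun c ≤ sfun η := by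
      refine sfun_antitoneOn ⟨hη0, hη2⟩ ⟨lt_trans hη0 hc.1, by linarith [hc.2]⟩ (le_of_lt hc.1)
    rw [hc2, div_le_iff₀ (by linarith : (0:ℝ) < q - η)] at hcs
    nlinarith [hcs]

lemma fskew_half : fskew (1/2) = 0 := by
  norm_num [fskew, binH]

lemma fskew_one : fskew 1 = Real.log 2 := by
  have : negMulLog (1/2 : ℝ) = (1/2) * Real.log 2 := by
    rw [negMulLog, show (1:ℝ)/2 = 2⁻¹ by norm_num, Real.log_inv]
    ring
  norm_num [fskew, binH, this]
  ring

/-- chord bound on the convex part -/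
lemma fskew_chord {q : ℝ} (hq : 1/2 ≤ q) (hq1 : q ≤ 1) : fskew q ≤ (2*q - 1) * Real.log 2 := by
  have hmono : MonotoneOn (deriv fskew) (interior (Set.Icc (1/2 : ℝ) 1)) := by
    rw [interior_Icc]
    have h1 : MonotoneOn sfun (Set.Ioo (1/2 : ℝ) 1) := by
      refine monotoneOn_of_deriv_nonneg (convex_Ioo _ _) ?_ ?_ ?_
      · intro x hx
        exact (hasDerivAt_sfun (by linarith [hx.1]) hx.2).continuousAt.continuousWithinAt
      · rw [interior_Ioo]
        intro x hx
        exact (hasDerivAt_sfun (by linarith [hx.1]) hx.2).differentiableAt.differentiableWithinAt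
      · rw [interior_Ioo]
        intro x hx
        rw [(hasDerivAt_sfun (by linarith [hx.1]) hx.2).deriv]
        -- sder ≥ 0 on (1/2, 1)
        have ha : (0:ℝ) < 2 - x := by linarith [hx.2]
        have hb : (0:ℝ) < 1 + x := by linarith [hx.1]
        have hc : (0:ℝ) < 1 - x := by linarith [hx.2]
        have hx0 : (0:ℝ) < x := by linarith [hx.1]
        rw [sder]
        apply div_nonneg _ (by norm_num)
        have e1 : (1 + x)⁻¹ + (1 - x)⁻¹ = 2 / ((1 + x) * (1 - x)) := by field_simp; ring
        have e2 : (2 - x)⁻¹ + x⁻¹ = 2 / (x * (2 - x)) := by field_simp; ring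
        have h3 : (0:ℝ) < (1 + x) * (1 - x) := by positivity
        have h4 : (1 + x) * (1 - x) ≤ x * (2 - x) := by nlinarith [hx.1]
        have := div_le_div_of_nonneg_left (by norm_num : (0:ℝ) ≤ 2) h3 h4
        nlinarith [this]
    intro x hx y hy hxy
    rw [(hasDerivAt_fskew (by linarith [hx.1]) hx.2).deriv,
      (hasDerivAt_fskew (by linarith [hy.1]) hy.2).deriv]
    exact h1 hx hy hxy
  have hconv : ConvexOn ℝ (Set.Icc (1/2 : ℝ) 1) fskew := by
    refine MonotoneOn.convexOn_of_deriv (convex_Icc _ _) continuous_fskew.continuousOn ?_ hmono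
    rw [interior_Icc]
    intro x hx
    exact (hasDerivAt_fskew (by linarith [hx.1]) hx.2).differentiableAt.differentiableWithinAt
  have hcomb := hconv.2 (Set.left_mem_Icc.2 (by norm_num)) (Set.right_mem_Icc.2 (by norm_num))
    (by linarith : (0:ℝ) ≤ 2 - 2*q) (by linarith : (0:ℝ) ≤ 2*q - 1) (by ring)
  simp only [smul_eq_mul] at hcomb
  have harg : (2 - 2*q) * (1/2 : ℝ) + (2*q - 1) * 1 = q := by ring
  rw [harg, fskew_half, fskew_one] at hcomb
  linarith [hcomb]

lemma negMulLog_half : negMulLog (1/2 : ℝ) = (1/2) * Real.log 2 := by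
  rw [negMulLog, show (1:ℝ)/2 = 2⁻¹ by norm_num, Real.log_inv]
  ring

lemma T_onefifth : fskew (1/5) + sfun (1/5) * (1 - 1/5) = Real.log 2 := by
  have r1 : Real.log ((1:ℝ)/10) = -(Real.log 2 + Real.log 5) := by
    rw [show (1:ℝ)/10 = (10:ℝ)⁻¹ by norm_num, Real.log_inv,
      show (10:ℝ) = 2*5 by norm_num, Real.log_mul (by norm_num) (by norm_num)]
  have l9 : Real.log (9:ℝ) = 2 * Real.log 3 := by
    rw [show (9:ℝ) = 3^(2:ℕ) by norm_num, Real.log_pow]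
    push_cast
    ring
  have l4 : Real.log (4:ℝ) = 2 * Real.log 2 := by
    rw [show (4:ℝ) = 2^(2:ℕ) by norm_num, Real.log_pow]
    push_cast
    ring
  have r2 : Real.log ((9:ℝ)/10) = 2*Real.log 3 - (Real.log 2 + Real.log 5) := by
    rw [Real.log_div (by norm_num) (by norm_num), l9,
      show (10:ℝ) = 2*5 by norm_num, Real.log_mul (by norm_num) (by norm_num)]
  have r3 : Real.log ((2:ℝ)/5) = Real.log 2 - Real.log 5 :=
    Real.log_div (by norm_num) (by norm_num)
  have r4 : Real.log ((3:ℝ)/5) = Real.log 3 - Real.log 5 :=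
    Real.log_div (by norm_num) (by norm_num)
  have r5 : Real.log ((9:ℝ)/5) = 2*Real.log 3 - Real.log 5 := by
    rw [Real.log_div (by norm_num) (by norm_num), l9]
  have r6 : Real.log ((1:ℝ)/5) = -Real.log 5 := by
    rw [show (1:ℝ)/5 = (5:ℝ)⁻¹ by norm_num, Real.log_inv]
  have r7 : Real.log ((6:ℝ)/5) = Real.log 2 + Real.log 3 - Real.log 5 := by
    rw [Real.log_div (by norm_num) (by norm_num),
      show (6:ℝ) = 2*3 by norm_num, Real.log_mul (by norm_num) (by norm_num)]
  have r8 : Real.log ((4:ℝ)/5) = 2*Real.log 2 - Real.log 5 := by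
    rw [Real.log_div (by norm_num) (by norm_num), l4]
  simp only [fskew, binH, sfun, negMulLog]
  norm_num
  rw [r1, r2, r3, r4, r5, r6, r7, r8]
  ring

lemma T_ge {η : ℝ} (h0 : 0 < η) (h5 : η ≤ 1/5) :
    Real.log 2 ≤ fskew η + sfun η * (1 - η) := by
  have hT : ∀ x ∈ Set.Ioo (0:ℝ) (1/2),
      HasDerivAt (fun q => fskew q + sfun q * (1 - q)) (sder x * (1 - x)) x := by
    intro x hx
    have h1 := hasDerivAt_fskew hx.1 (by linarith [hx.2])
    have h2 := (hasDerivAt_sfun hx.1 (by linarith [hx.2])).mul ((hasDerivAt_id x).const_sub 1)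
    have h3 := h1.add h2
    refine h3.congr_deriv ?_
    simp
  have hanti : AntitoneOn (fun q => fskew q + sfun q * (1 - q)) (Set.Ioc 0 (1/5:ℝ)) := by
    refine antitoneOn_of_deriv_nonpos (convex_Ioc _ _) ?_ ?_ ?_
    · intro x hx
      exact (hT x ⟨hx.1, by linarith [hx.2]⟩).continuousAt.continuousWithinAt
    · rw [interior_Ioc]
      intro x hx
      exact (hT x ⟨hx.1, by linarith [hx.2]⟩).differentiableAt.differentiableWithinAt
    · rw [interior_Ioc]
      intro x hx
      rw [(hT x ⟨hx.1, by linarith [hx.2]⟩).deriv]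
      exact mul_nonpos_of_nonpos_of_nonneg (sder_nonpos hx.1 (by linarith [hx.2]))
        (by linarith [hx.2])
  have := hanti ⟨h0, h5⟩ ⟨by norm_num, le_refl _⟩ h5
  simp only at this
  rw [T_onefifth] at this
  exact this

lemma fskew_le_line {η q : ℝ} (hη0 : 0 < η) (hη5 : η ≤ 1/5) (hq0 : 0 ≤ q) (hq1 : q ≤ 1) :
    fskew q ≤ fskew η + sfun η * (q - η) := by
  rcases le_or_gt q (1/2) with h | h
  · exact fskew_tangent hη0 (by linarith) hq0 h
  · have hchord := fskew_chord (le_of_lt h) hq1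
    have h12 := fskew_tangent hη0 (by linarith) (by norm_num : (0:ℝ) ≤ 1/2) (le_refl _)
    rw [fskew_half] at h12
    have hTge := T_ge hη0 hη5
    have m1 := mul_le_mul_of_nonneg_left hTge (show (0:ℝ) ≤ 2*q - 1 by linarith)
    have m2 := mul_le_mul_of_nonneg_left h12 (show (0:ℝ) ≤ 2 - 2*q by linarith)
    nlinarith [m1, m2, hchord]

noncomputable def Gfun (u v : ℝ) : ℝ :=
  negMulLog (v/2) + negMulLog (u + v/2) - negMulLog (u/2) - negMulLog (u/2 + v)

lemma Gfun_scale (p u v : ℝ) : Gfun (p*u) (p*v) = p * Gfun u v := by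
  simp only [Gfun]
  rw [show p*u/2 = p*(u/2) by ring, show p*v/2 = p*(v/2) by ring,
    show p*u + p*(v/2) = p*(u+v/2) by ring, show p*(u/2) + p*v = p*(u/2+v) by ring,
    negMulLog_mul, negMulLog_mul, negMulLog_mul, negMulLog_mul]
  ring

lemma Gfun_eq_fskew (t : ℝ) : Gfun (1-t) t = fskew t := by
  simp only [Gfun, fskew, binH]
  rw [show (1-t) + t/2 = 1 - t/2 by ring, show (1-t)/2 + t = 1 - (1-t)/2 by ring]
  ring

lemma Gfun_zero : Gfun 0 0 = 0 := by
  simp [Gfun]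

lemma Gfun_le_line {η u v : ℝ} (hη0 : 0 < η) (hη5 : η ≤ 1/5) (hu : 0 ≤ u) (hv : 0 ≤ v) :
    Gfun u v ≤ (fskew η + sfun η * (0 - η)) * u + (fskew η + sfun η * (1 - η)) * v := by
  rcases eq_or_lt_of_le (by positivity : (0:ℝ) ≤ u + v) with h0 | h0
  · have hu0 : u = 0 := by linarith
    have hv0 : v = 0 := by linarith
    rw [hu0, hv0, Gfun_zero]
    simp
  · set p := u + v with hp
    set t := v / p with ht
    have ht0 : 0 ≤ t := by positivity
    have ht1 : t ≤ 1 := by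
      rw [ht, div_le_one h0]
      linarith
    have hrep : Gfun u v = p * fskew t := by
      have h1 : u = p * (1 - t) := by
        rw [ht]
        field_simp
        linarith
      have h2 : v = p * t := by
        rw [ht]
        field_simp
      calc Gfun u v = Gfun (p * (1-t)) (p * t) := by rw [← h1, ← h2]
        _ = p * Gfun (1-t) t := Gfun_scale p _ _
        _ = p * fskew t := by rw [Gfun_eq_fskew]
    rw [hrep]
    have hline := fskew_le_line hη0 hη5 ht0 ht1
    have := mul_le_mul_of_nonneg_left hline (le_of_lt h0)
    calc p * fskew t ≤ p * (fskew η + sfun η * (t - η)) := this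
      _ = (fskew η + sfun η * (0 - η)) * p + sfun η * (p * t) := by ring
      _ = (fskew η + sfun η * (0 - η)) * (u + v) + sfun η * v := by
          rw [show p * t = v by rw [ht]; field_simp]
      _ = (fskew η + sfun η * (0 - η)) * u + (fskew η + sfun η * (1 - η)) * v := by ring

lemma key_analytic {A : Type*} [Fintype A] (r : A → Bool → ℝ) (hr : ∀ a x, 0 ≤ r a x)
    {η : ℝ} (hη : ∑ a, r a true = η) (htot : (∑ a, r a false) + ∑ a, r a true = 1)
    (h5 : η ≤ 1/5) :
    ∑ a, Gfun (r a false) (r a true) ≤ fskew η := by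
  have hη0 : 0 ≤ η := hη ▸ Finset.sum_nonneg fun a _ => hr a true
  have hfalse : ∑ a, r a false = 1 - η := by rw [← hη]; linarith
  rcases eq_or_lt_of_le hη0 with h0 | h0
  · -- η = 0
    have hz : ∀ a ∈ Finset.univ, r a true = 0 := by
      rw [← Finset.sum_eq_zero_iff_of_nonneg (fun a _ => hr a true)]
      rw [hη, ← h0]
    have hG : ∀ a ∈ Finset.univ, Gfun (r a false) (r a true) = -(r a false * Real.log 2) := by
      intro a ha
      rw [hz a ha]
      simp only [Gfun, add_zero, zero_div, negMulLog_zero, zero_add]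
      rw [show r a false / 2 = r a false * (1/2) by ring, negMulLog_mul, negMulLog_half]
      ring
    have hfs0 : fskew 0 = -Real.log 2 := by
      simp only [fskew, binH]
      norm_num [negMulLog_half]
      ring
    rw [Finset.sum_congr rfl hG, Finset.sum_neg_distrib, ← Finset.sum_mul, hfalse, ← h0, hfs0]
    norm_num
  · -- η > 0
    have hb : ∀ a ∈ Finset.univ, Gfun (r a false) (r a true)
        ≤ (fskew η + sfun η * (0 - η)) * r a false + (fskew η + sfun η * (1 - η)) * r a true :=
      fun a _ => Gfun_le_line h0 h5 (hr a false) (hr a true)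
    calc ∑ a, Gfun (r a false) (r a true)
        ≤ ∑ a, ((fskew η + sfun η * (0 - η)) * r a false
            + (fskew η + sfun η * (1 - η)) * r a true) := Finset.sum_le_sum hb
      _ = (fskew η + sfun η * (0 - η)) * (∑ a, r a false)
            + (fskew η + sfun η * (1 - η)) * (∑ a, r a true) := by
          rw [Finset.sum_add_distrib, ← Finset.mul_sum, ← Finset.mul_sum]
      _ = fskew η := by
          rw [hfalse, hη]
          ring

section Core
variable {Ω A B : Type*} [MeasurableSpace Ω]
    (μ : Measure Ω) [IsProbabilityMeasure μ]
    [Fintype A] [MeasurableSpace A] [MeasurableSingletonClass A]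
    [Fintype B] [MeasurableSpace B] [MeasurableSingletonClass B]

set_option maxHeartbeats 4000000 in
lemma core (U : Ω → A) (V : Ω → B) (X Y1 Y2 : Ω → Bool)
    (hU : Measurable U) (hV : Measurable V) (hX : Measurable X)
    (hY1 : Measurable Y1) (hY2 : Measurable Y2)
    (hMarkov : CondIndepGiven μ (fun ω => (U ω, V ω)) X (fun ω => (Y1 ω, Y2 ω)))
    (hBSSC : IsBSSC μ X Y1 Y2)
    (hskew : prob μ X true ≤ 1 / 5) :
    mutualInfo μ U Y1 + mutualInfo μ V Y2 - mutualInfo μ U V ≤ mutualInfo μ X Y2 := by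
  classical
  set m1 : ℝ := prob μ X true with hm1
  have hQmeas : Measurable (fun ω => ((U ω, V ω), X ω, (Y1 ω, Y2 ω))) :=
    (hU.prodMk hV).prodMk (hX.prodMk (hY1.prodMk hY2))
  have hRmeas : Measurable (fun ω => (X ω, Y1 ω, Y2 ω)) := hX.prodMk (hY1.prodMk hY2)
  have hPmeas : Measurable (fun ω => ((U ω, V ω), X ω)) := (hU.prodMk hV).prodMk hX
  set w : A → B → Bool → ℝ := fun a b x => prob μ (fun ω => ((U ω, V ω), X ω)) ((a, b), x)
    with hw
  set r : A → Bool → ℝ := fun a x => ∑ b, w a b x with hr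
  have hw_nonneg : ∀ a b x, 0 ≤ w a b x := fun a b x => prob_nonneg μ _ _
  have hr_nonneg : ∀ a x, 0 ≤ r a x := fun a x => Finset.sum_nonneg fun b _ => hw_nonneg a b x
  have hXtot : prob μ X false + prob μ X true = 1 := by
    have h := sum_prob_eq_one μ X hX
    rw [Fintype.sum_bool] at h
    linarith
  -- factorization of the joint law
  have hfact : ∀ a b x y1 y2, prob μ (fun ω => ((U ω, V ω), X ω, (Y1 ω, Y2 ω))) ((a,b),x,(y1,y2))
      = w a b x * bsscK x y1 y2 := by
    intro a b x y1 y2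
    have hM := hMarkov (a, b) x (y1, y2)
    rw [hBSSC x y1 y2] at hM
    rcases eq_or_lt_of_le (prob_nonneg μ X x) with hx0 | hx0
    · have h1 : prob μ (fun ω => ((U ω, V ω), X ω, (Y1 ω, Y2 ω))) ((a,b),x,(y1,y2)) = 0 := by
        refine le_antisymm ?_ (prob_nonneg μ _ _)
        refine le_trans (prob_le_of_imp μ _ X _ x ?_) (le_of_eq hx0.symm)
        intro ω h
        simpa using congrArg (fun z => z.2.1) h
      have h2 : w a b x = 0 := by
        refine le_antisymm ?_ (prob_nonneg μ _ _)
        refine le_trans (prob_le_of_imp μ _ X _ x ?_) (le_of_eq hx0.symm)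
        intro ω h
        simpa using congrArg (fun z => z.2) h
      rw [h1, h2]
      ring
    · refine mul_right_cancel₀ hx0.ne' ?_
      rw [hM]
      ring
  -- marginal of X through the pair ((U,V),X)
  have hXmarg : ∀ x, prob μ X x = ∑ a, ∑ b, w a b x := by
    intro x
    have hstep := prob_comp_eq_sum μ (fun ω => ((U ω, V ω), X ω)) hPmeas (fun z => z.2) x
    rw [show X = (fun ω => ((fun z : (A × B) × Bool => z.2) ((U ω, V ω), X ω))) from rfl, hstep]
    rw [Fintype.sum_prod_type]
    cases x <;>
      simp [Fintype.sum_prod_type, Fintype.sum_bool, Prod.ext_iff, ite_and, sum_ite_const,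
        Finset.sum_ite_eq, Finset.sum_ite_eq']
    all_goals rfl
  have hr_true : ∑ a, r a true = m1 := (hXmarg true).symm
  have hr_tot : (∑ a, r a false) + ∑ a, r a true = 1 := by
    have h : (∑ a, ∑ b, w a b false) + ∑ a, ∑ b, w a b true = 1 := by
      rw [← hXmarg false, ← hXmarg true]
      exact hXtot
    exact h
  have hm1_0 : 0 ≤ m1 := prob_nonneg μ X true
  have hm1_1 : prob μ X false = 1 - m1 := by linarith
  -- (X,Y2) joint law
  have hXY2p : ∀ x y2, prob μ (fun ω => (X ω, Y2 ω)) (x, y2)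
      = ∑ y1, prob μ X x * bsscK x y1 y2 := by
    intro x y2
    have hstep := prob_comp_eq_sum μ (fun ω => (X ω, Y1 ω, Y2 ω)) hRmeas
      (fun z => (z.1, z.2.2)) (x, y2)
    rw [show (fun ω => (X ω, Y2 ω))
      = (fun ω => ((fun z : Bool × Bool × Bool => (z.1, z.2.2)) (X ω, Y1 ω, Y2 ω))) from rfl,
      hstep]
    rw [Fintype.sum_prod_type]
    have hb : ∀ y1, prob μ (fun ω => (X ω, Y1 ω, Y2 ω)) (x, y1, y2) = prob μ X x * bsscK x y1 y2 :=
      fun y1 => hBSSC x y1 y2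
    cases x <;> cases y2 <;>
      simp [Fintype.sum_prod_type, Fintype.sum_bool, Prod.ext_iff, ite_and, sum_ite_const,
        Finset.sum_ite_eq, Finset.sum_ite_eq', hb]
  -- marginal of Y1
  have hY1p : ∀ y1, prob μ Y1 y1 = ∑ x, ∑ y2, prob μ X x * bsscK x y1 y2 := by
    intro y1
    have hstep := prob_comp_eq_sum μ (fun ω => (X ω, Y1 ω, Y2 ω)) hRmeas
      (fun z => z.2.1) y1
    rw [show Y1 = (fun ω => ((fun z : Bool × Bool × Bool => z.2.1) (X ω, Y1 ω, Y2 ω))) from rfl,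
      hstep]
    rw [Fintype.sum_prod_type]
    have hb : ∀ x y2, prob μ (fun ω => (X ω, Y1 ω, Y2 ω)) (x, y1, y2)
        = prob μ X x * bsscK x y1 y2 := fun x y2 => hBSSC x y1 y2
    cases y1 <;>
      simp [Fintype.sum_prod_type, Fintype.sum_bool, Prod.ext_iff, ite_and, sum_ite_const,
        Finset.sum_ite_eq, Finset.sum_ite_eq', hb]
  -- marginal of Y2
  have hY2p : ∀ y2, prob μ Y2 y2 = ∑ x, ∑ y1, prob μ X x * bsscK x y1 y2 := by
    intro y2
    have hstep := prob_comp_eq_sum μ (fun ω => (X ω, Y1 ω, Y2 ω)) hRmeas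
      (fun z => z.2.2) y2
    rw [show Y2 = (fun ω => ((fun z : Bool × Bool × Bool => z.2.2) (X ω, Y1 ω, Y2 ω))) from rfl,
      hstep]
    rw [Fintype.sum_prod_type]
    have hb : ∀ x y1, prob μ (fun ω => (X ω, Y1 ω, Y2 ω)) (x, y1, y2)
        = prob μ X x * bsscK x y1 y2 := fun x y1 => hBSSC x y1 y2
    cases y2 <;>
      simp [Fintype.sum_prod_type, Fintype.sum_bool, Prod.ext_iff, ite_and, sum_ite_const,
        Finset.sum_ite_eq, Finset.sum_ite_eq', hb]
  -- (U,Y1) joint law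
  have hUY1p : ∀ a y1, prob μ (fun ω => (U ω, Y1 ω)) (a, y1)
      = ∑ b, ∑ x, ∑ y2, w a b x * bsscK x y1 y2 := by
    intro a y1
    have hstep := prob_comp_eq_sum μ (fun ω => ((U ω, V ω), X ω, (Y1 ω, Y2 ω))) hQmeas
      (fun z => (z.1.1, z.2.2.1)) (a, y1)
    rw [show (fun ω => (U ω, Y1 ω))
      = (fun ω => ((fun z : (A × B) × Bool × (Bool × Bool) => (z.1.1, z.2.2.1))
          ((U ω, V ω), X ω, (Y1 ω, Y2 ω)))) from rfl, hstep]
    rw [Fintype.sum_prod_type]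
    have hb : ∀ b x y1' y2', prob μ (fun ω => ((U ω, V ω), X ω, (Y1 ω, Y2 ω))) ((a,b),x,(y1',y2'))
        = w a b x * bsscK x y1' y2' := fun b x y1' y2' => hfact a b x y1' y2'
    cases y1 <;>
      (simp [Fintype.sum_prod_type, Fintype.sum_bool, Prod.ext_iff, ite_and, sum_ite_const,
        Finset.sum_ite_eq, Finset.sum_ite_eq'] <;>
       rw [Finset.sum_comm] <;> simp [Finset.sum_ite_eq', hb])
  -- (U,Y2) joint law
  have hUY2p : ∀ a y2, prob μ (fun ω => (U ω, Y2 ω)) (a, y2)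
      = ∑ b, ∑ x, ∑ y1, w a b x * bsscK x y1 y2 := by
    intro a y2
    have hstep := prob_comp_eq_sum μ (fun ω => ((U ω, V ω), X ω, (Y1 ω, Y2 ω))) hQmeas
      (fun z => (z.1.1, z.2.2.2)) (a, y2)
    rw [show (fun ω => (U ω, Y2 ω))
      = (fun ω => ((fun z : (A × B) × Bool × (Bool × Bool) => (z.1.1, z.2.2.2))
          ((U ω, V ω), X ω, (Y1 ω, Y2 ω)))) from rfl, hstep]
    rw [Fintype.sum_prod_type]
    have hb : ∀ b x y1' y2', prob μ (fun ω => ((U ω, V ω), X ω, (Y1 ω, Y2 ω))) ((a,b),x,(y1',y2'))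
        = w a b x * bsscK x y1' y2' := fun b x y1' y2' => hfact a b x y1' y2'
    cases y2 <;>
      (simp [Fintype.sum_prod_type, Fintype.sum_bool, Prod.ext_iff, ite_and, sum_ite_const,
        Finset.sum_ite_eq, Finset.sum_ite_eq'] <;>
       rw [Finset.sum_comm] <;> simp [Finset.sum_ite_eq', hb])
  -- (X,(U,V)) law
  have hXUVp : ∀ x a b, prob μ (fun ω => (X ω, (U ω, V ω))) (x, (a, b)) = w a b x := by
    intro x a b
    exact prob_congr μ (fun ω => by
      constructor
      · intro h
        simp only [Prod.mk.injEq] at h ⊢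
        exact ⟨⟨h.2.1, h.2.2⟩, h.1⟩
      · intro h
        simp only [Prod.mk.injEq] at h ⊢
        exact ⟨h.2, h.1.1, h.1.2⟩)
  -- (Y2,(X,(U,V))) law
  have hY2XUVp : ∀ y2 x a b, prob μ (fun ω => (Y2 ω, X ω, (U ω, V ω))) (y2, x, (a, b))
      = ∑ y1, w a b x * bsscK x y1 y2 := by
    intro y2 x a b
    have hstep := prob_comp_eq_sum μ (fun ω => ((U ω, V ω), X ω, (Y1 ω, Y2 ω))) hQmeas
      (fun z => (z.2.2.2, z.2.1, z.1)) (y2, x, (a, b))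
    rw [show (fun ω => (Y2 ω, X ω, (U ω, V ω)))
      = (fun ω => ((fun z : (A × B) × Bool × (Bool × Bool) => (z.2.2.2, z.2.1, z.1))
          ((U ω, V ω), X ω, (Y1 ω, Y2 ω)))) from rfl, hstep]
    rw [Fintype.sum_prod_type]
    have hb : ∀ b' x' y1' y2', prob μ (fun ω => ((U ω, V ω), X ω, (Y1 ω, Y2 ω))) ((a,b'),x',(y1',y2'))
        = w a b' x' * bsscK x' y1' y2' := fun b' x' y1' y2' => hfact a b' x' y1' y2'
    cases y2 <;> cases x <;>
      simp [Fintype.sum_prod_type, Fintype.sum_bool, Prod.ext_iff, ite_and, sum_ite_const,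
        Finset.sum_ite_eq, Finset.sum_ite_eq', hb, hfact]
  -- explicit probability values
  have pXY2ff : prob μ (fun ω => (X ω, Y2 ω)) (false, false) = 1 - m1 := by
    rw [hXY2p, Fintype.sum_bool]
    norm_num [bsscK]
    all_goals try rw [← hm1]
    all_goals try ring
    all_goals try linarith [hm1_1]
  have pXY2ft : prob μ (fun ω => (X ω, Y2 ω)) (false, true) = 0 := by
    rw [hXY2p, Fintype.sum_bool]
    norm_num [bsscK]
  have pXY2tf : prob μ (fun ω => (X ω, Y2 ω)) (true, false) = m1 / 2 := by
    rw [hXY2p, Fintype.sum_bool]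
    norm_num [bsscK]
    all_goals try rw [← hm1]
    all_goals try ring
    all_goals try linarith [hm1_1]
  have pXY2tt : prob μ (fun ω => (X ω, Y2 ω)) (true, true) = m1 / 2 := by
    rw [hXY2p, Fintype.sum_bool]
    norm_num [bsscK]
    all_goals try rw [← hm1]
    all_goals try ring
    all_goals try linarith [hm1_1]
  have pY1f : prob μ Y1 false = (1 - m1) / 2 := by
    rw [hY1p, Fintype.sum_bool]
    norm_num [bsscK]
    all_goals try rw [← hm1]
    all_goals try ring
    all_goals try linarith [hm1_1]
  have pY1t : prob μ Y1 true = 1 - (1 - m1) / 2 := by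
    rw [hY1p, Fintype.sum_bool]
    norm_num [bsscK]
    all_goals try rw [← hm1]
    all_goals try ring
    all_goals try linarith [hm1_1]
  have pY2t : prob μ Y2 true = m1 / 2 := by
    rw [hY2p, Fintype.sum_bool]
    norm_num [bsscK]
    all_goals try rw [← hm1]
    all_goals try ring
    all_goals try linarith [hm1_1]
  have pY2f : prob μ Y2 false = 1 - m1 / 2 := by
    rw [hY2p, Fintype.sum_bool]
    norm_num [bsscK]
    all_goals try rw [← hm1]
    all_goals try ring
    all_goals try linarith [hm1_1]
  have pUY1f : ∀ a, prob μ (fun ω => (U ω, Y1 ω)) (a, false) = r a false / 2 := by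
    intro a
    rw [hUY1p a false]
    have : ∀ b, (∑ x, ∑ y2, w a b x * bsscK x false y2) = w a b false / 2 := by
      intro b
      rw [Fintype.sum_bool, Fintype.sum_bool, Fintype.sum_bool]
      norm_num [bsscK]
      all_goals try ring
    rw [Finset.sum_congr rfl fun b _ => this b, ← Finset.sum_div]
    try rfl
  have pUY1t : ∀ a, prob μ (fun ω => (U ω, Y1 ω)) (a, true) = r a false / 2 + r a true := by
    intro a
    rw [hUY1p a true]
    have : ∀ b, (∑ x, ∑ y2, w a b x * bsscK x true y2) = w a b false / 2 + w a b true := by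
      intro b
      rw [Fintype.sum_bool, Fintype.sum_bool, Fintype.sum_bool]
      norm_num [bsscK]
      all_goals try ring
    rw [Finset.sum_congr rfl fun b _ => this b, Finset.sum_add_distrib, ← Finset.sum_div]
    try rfl
  have pUY2t : ∀ a, prob μ (fun ω => (U ω, Y2 ω)) (a, true) = r a true / 2 := by
    intro a
    rw [hUY2p a true]
    have : ∀ b, (∑ x, ∑ y1, w a b x * bsscK x y1 true) = w a b true / 2 := by
      intro b
      rw [Fintype.sum_bool, Fintype.sum_bool, Fintype.sum_bool]
      norm_num [bsscK]
      all_goals try ring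
    rw [Finset.sum_congr rfl fun b _ => this b, ← Finset.sum_div]
    try rfl
  have pUY2f : ∀ a, prob μ (fun ω => (U ω, Y2 ω)) (a, false) = r a false + r a true / 2 := by
    intro a
    rw [hUY2p a false]
    have : ∀ b, (∑ x, ∑ y1, w a b x * bsscK x y1 false) = w a b false + w a b true / 2 := by
      intro b
      rw [Fintype.sum_bool, Fintype.sum_bool, Fintype.sum_bool]
      norm_num [bsscK]
      all_goals try ring
    rw [Finset.sum_congr rfl fun b _ => this b, Finset.sum_add_distrib, ← Finset.sum_div]
    try rfl
  -- entropy evaluations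
  have eXv : entropy μ X = negMulLog m1 + negMulLog (1 - m1) := by
    rw [entropy, Fintype.sum_bool, hm1_1, ← hm1]
  have eXY2v : entropy μ (fun ω => (X ω, Y2 ω)) = entropy μ X + m1 * Real.log 2 := by
    rw [entropy, Fintype.sum_prod_type, Fintype.sum_bool, Fintype.sum_bool, Fintype.sum_bool,
      pXY2ff, pXY2ft, pXY2tf, pXY2tt, eXv]
    rw [show m1 / 2 = m1 * (1/2) by ring, negMulLog_mul, negMulLog_half]
    simp [negMulLog_zero]
    try ring
  have eY1v : entropy μ Y1 = binH ((1 - m1) / 2) := by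
    rw [entropy, Fintype.sum_bool, pY1f, pY1t, binH]
    try ring
  have eY2v : entropy μ Y2 = binH (m1 / 2) := by
    rw [entropy, Fintype.sum_bool, pY2t, pY2f, binH]
    try ring
  have eUY1v : entropy μ (fun ω => (U ω, Y1 ω))
      = ∑ a, (negMulLog (r a false / 2 + r a true) + negMulLog (r a false / 2)) := by
    rw [entropy, Fintype.sum_prod_type]
    refine Finset.sum_congr rfl fun a _ => ?_
    rw [Fintype.sum_bool, pUY1f a, pUY1t a]
  have eUY2v : entropy μ (fun ω => (U ω, Y2 ω))
      = ∑ a, (negMulLog (r a true / 2) + negMulLog (r a false + r a true / 2)) := by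
    rw [entropy, Fintype.sum_prod_type]
    refine Finset.sum_congr rfl fun a _ => ?_
    rw [Fintype.sum_bool, pUY2t a, pUY2f a]
  -- the exact identity H(Y2,X,(U,V)) = H(X,(U,V)) + m1 log 2
  have eXUVv : entropy μ (fun ω => (X ω, (U ω, V ω)))
      = ∑ x, ∑ a, ∑ b, negMulLog (w a b x) := by
    rw [entropy, Fintype.sum_prod_type]
    refine Finset.sum_congr rfl fun x _ => ?_
    rw [Fintype.sum_prod_type]
    refine Finset.sum_congr rfl fun a _ => Finset.sum_congr rfl fun b _ => ?_
    rw [hXUVp]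
  have sumsplit : ∀ (f g : A → B → ℝ),
      (∑ a, ∑ b, (f a b + g a b)) = (∑ a, ∑ b, f a b) + ∑ a, ∑ b, g a b := by
    intro f g
    rw [← Finset.sum_add_distrib]
    exact Finset.sum_congr rfl fun a _ => Finset.sum_add_distrib
  have F4id : entropy μ (fun ω => (Y2 ω, X ω, (U ω, V ω)))
      = entropy μ (fun ω => (X ω, (U ω, V ω))) + m1 * Real.log 2 := by
    have pv : ∀ y2 x a b, prob μ (fun ω => (Y2 ω, X ω, (U ω, V ω))) (y2, x, (a, b))
        = w a b x * (if x = true then (1:ℝ)/2 else (if y2 = true then 0 else 1)) := by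
      intro y2 x a b
      rw [hY2XUVp, Fintype.sum_bool]
      cases x <;> cases y2 <;> (norm_num [bsscK]; try ring)
    have expand : ∀ y2 : Bool, (∑ z : Bool × (A × B),
        negMulLog (prob μ (fun ω => (Y2 ω, X ω, (U ω, V ω))) (y2, z)))
        = ∑ x, ∑ a, ∑ b,
            negMulLog (w a b x * (if x = true then (1:ℝ)/2 else (if y2 = true then 0 else 1))) := by
      intro y2
      rw [Fintype.sum_prod_type]
      refine Finset.sum_congr rfl fun x _ => ?_
      rw [Fintype.sum_prod_type]
      refine Finset.sum_congr rfl fun a _ => Finset.sum_congr rfl fun b _ => ?_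
      rw [pv]
    rw [entropy, Fintype.sum_prod_type, Fintype.sum_bool, eXUVv, expand true, expand false,
      hm1, hXmarg true]
    simp only [Fintype.sum_bool]
    norm_num [negMulLog_zero]
    have key2 : (∑ a, ∑ b, negMulLog (w a b true * (1/2)))
          + (∑ a, ∑ b, negMulLog (w a b true * (1/2)))
        = (∑ a, ∑ b, negMulLog (w a b true)) + (∑ a, ∑ b, w a b true) * Real.log 2 := by
      calc (∑ a, ∑ b, negMulLog (w a b true * (1/2)))
            + (∑ a, ∑ b, negMulLog (w a b true * (1/2)))
          = ∑ a, ∑ b, (negMulLog (w a b true * (1/2)) + negMulLog (w a b true * (1/2))) :=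
            (sumsplit _ _).symm
        _ = ∑ a, ∑ b, (negMulLog (w a b true) + w a b true * Real.log 2) := by
            refine Finset.sum_congr rfl fun a _ => Finset.sum_congr rfl fun b _ => ?_
            rw [negMulLog_mul, negMulLog_half]
            ring
        _ = (∑ a, ∑ b, negMulLog (w a b true)) + ∑ a, ∑ b, (w a b true * Real.log 2) :=
            sumsplit _ _
        _ = (∑ a, ∑ b, negMulLog (w a b true)) + (∑ a, ∑ b, w a b true) * Real.log 2 := by
            rw [Finset.sum_mul]
            refine congrArg _ (Finset.sum_congr rfl fun a _ => ?_)
            rw [Finset.sum_mul]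
    linarith [key2]
  -- submodularity inequalities
  have S1 := submod μ U V Y2 hU hV hY2
  have S2 := submod μ Y2 X (fun ω => (U ω, V ω)) hY2 hX (hU.prodMk hV)
  have Elink : entropy μ (fun ω => (U ω, V ω, Y2 ω))
      = entropy μ (fun ω => (Y2 ω, (U ω, V ω))) :=
    entropy_map_eq μ
      (⟨fun z => (z.2.1, (z.2.2, z.1)), fun z => (z.2.2, (z.1, z.2.1)),
        fun z => rfl, fun z => rfl⟩ : (Bool × (A × B)) ≃ (A × (B × Bool)))
      (fun ω => rfl)
  have A3 : entropy μ (fun ω => (U ω, V ω)) + m1 * Real.log 2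
      ≤ entropy μ (fun ω => (U ω, V ω, Y2 ω)) := by
    rw [Elink]
    linarith [S2, F4id]
  have hGsum : (∑ a, (negMulLog (r a true / 2) + negMulLog (r a false + r a true / 2)))
      - (∑ a, (negMulLog (r a false / 2 + r a true) + negMulLog (r a false / 2)))
      = ∑ a, Gfun (r a false) (r a true) := by
    rw [← Finset.sum_sub_distrib]
    refine Finset.sum_congr rfl fun a _ => ?_
    simp only [Gfun]
    ring
  have hKA := key_analytic r hr_nonneg hr_true hr_tot hskew
  have A1 : entropy μ Y1 + entropy μ (fun ω => (U ω, Y2 ω))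
      ≤ entropy μ (fun ω => (U ω, Y1 ω)) + entropy μ Y2 := by
    rw [eY1v, eY2v, eUY1v, eUY2v]
    have hfs : fskew m1 = binH (m1/2) - binH ((1-m1)/2) := rfl
    linarith [hKA, hGsum]
  rw [mutualInfo, mutualInfo, mutualInfo, mutualInfo]
  linarith [A1, S1, A3, eXY2v]

end Core


/-- For `(U,V) → X → (Y₁,Y₂)` with `(Y₁,Y₂)` a BSSC (`p = 1/2`)
output of `X`: if `min {P(X = 0), P(X = 1)} ≤ 1/5`, then
`I(U;Y₁) + I(V;Y₂) − I(U;V) ≤ max {I(X;Y₁), I(X;Y₂)}`. -/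
theorem stmt15 {Ω A B : Type*} [MeasurableSpace Ω]
    (μ : Measure Ω) [IsProbabilityMeasure μ]
    [Fintype A] [MeasurableSpace A] [MeasurableSingletonClass A]
    [Fintype B] [MeasurableSpace B] [MeasurableSingletonClass B]
    (U : Ω → A) (V : Ω → B) (X Y1 Y2 : Ω → Bool)
    (hU : Measurable U) (hV : Measurable V) (hX : Measurable X)
    (hY1 : Measurable Y1) (hY2 : Measurable Y2)
    (hMarkov : CondIndepGiven μ (fun ω => (U ω, V ω)) X (fun ω => (Y1 ω, Y2 ω)))
    (hBSSC : IsBSSC μ X Y1 Y2)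
    (hη : min (prob μ X false) (prob μ X true) ≤ 1 / 5) :
    mutualInfo μ U Y1 + mutualInfo μ V Y2 - mutualInfo μ U V
      ≤ max (mutualInfo μ X Y1) (mutualInfo μ X Y2) := by
    classical
  rcases min_le_iff.1 hη with hf | ht
  · -- P(X = false) ≤ 1/5 : apply the core lemma to the "flipped" problem
    set X' : Ω → Bool := fun ω => !(X ω) with hX'def
    set Y1' : Ω → Bool := fun ω => !(Y2 ω) with hY1'def
    set Y2' : Ω → Bool := fun ω => !(Y1 ω) with hY2'def
    have hnot : Measurable (fun b : Bool => !b) := measurable_of_countable _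
    have hX' : Measurable X' := hnot.comp hX
    have hY1' : Measurable Y1' := hnot.comp hY2
    have hY2' : Measurable Y2' := hnot.comp hY1
    have bnot : ∀ s t : Bool, ((!s) = t) ↔ (s = !t) := by decide
    have p2 : ∀ x, prob μ X' x = prob μ X (!x) := fun x => prob_congr μ (fun ω => bnot _ _)
    have hMarkov' : CondIndepGiven μ (fun ω => (V ω, U ω)) X' (fun ω => (Y1' ω, Y2' ω)) := by
      intro ab x y12
      obtain ⟨b0, a0⟩ := ab
      obtain ⟨y1, y2⟩ := y12
      have p1 : prob μ (fun ω => ((V ω, U ω), X' ω, (Y1' ω, Y2' ω))) ((b0, a0), x, (y1, y2))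
          = prob μ (fun ω => ((U ω, V ω), X ω, (Y1 ω, Y2 ω))) ((a0, b0), !x, (!y2, !y1)) := by
        refine prob_congr μ (fun ω => ?_)
        simp only [hX'def, hY1'def, hY2'def, Prod.mk.injEq, bnot]
        tauto
      have p3 : prob μ (fun ω => ((V ω, U ω), X' ω)) ((b0, a0), x)
          = prob μ (fun ω => ((U ω, V ω), X ω)) ((a0, b0), !x) := by
        refine prob_congr μ (fun ω => ?_)
        simp only [hX'def, Prod.mk.injEq, bnot]
        tauto
      have p4 : prob μ (fun ω => (X' ω, (Y1' ω, Y2' ω))) (x, (y1, y2))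
          = prob μ (fun ω => (X ω, (Y1 ω, Y2 ω))) (!x, (!y2, !y1)) := by
        refine prob_congr μ (fun ω => ?_)
        simp only [hX'def, hY1'def, hY2'def, Prod.mk.injEq, bnot]
        tauto
      rw [p1, p2, p3, p4]
      exact hMarkov (a0, b0) (!x) (!y2, !y1)
    have hBSSC' : IsBSSC μ X' Y1' Y2' := by
      intro x y1 y2
      have p1 : prob μ (fun ω => (X' ω, Y1' ω, Y2' ω)) (x, y1, y2)
          = prob μ (fun ω => (X ω, Y1 ω, Y2 ω)) (!x, !y2, !y1) := by
        refine prob_congr μ (fun ω => ?_)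
        simp only [hX'def, hY1'def, hY2'def, Prod.mk.injEq, bnot]
        tauto
      have hKsym : bsscK (!x) (!y2) (!y1) = bsscK x y1 y2 := by
        cases x <;> cases y1 <;> cases y2 <;> simp [bsscK]
      rw [p1, hBSSC (!x) (!y2) (!y1), hKsym, p2]
    have hskew' : prob μ X' true ≤ 1 / 5 := by
      rw [p2]
      exact hf
    have hcore := core μ V U X' Y1' Y2' hV hU hX' hY1' hY2' hMarkov' hBSSC' hskew'
    -- translate the mutual informations
    have eY1' : entropy μ Y1' = entropy μ Y2 :=
      entropy_map_eq μ (⟨fun b => !b, fun b => !b, Bool.not_not, Bool.not_not⟩ : Bool ≃ Bool)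
        (fun ω => rfl)
    have eY2' : entropy μ Y2' = entropy μ Y1 :=
      entropy_map_eq μ (⟨fun b => !b, fun b => !b, Bool.not_not, Bool.not_not⟩ : Bool ≃ Bool)
        (fun ω => rfl)
    have eX'e : entropy μ X' = entropy μ X :=
      entropy_map_eq μ (⟨fun b => !b, fun b => !b, Bool.not_not, Bool.not_not⟩ : Bool ≃ Bool)
        (fun ω => rfl)
    have eVY1' : entropy μ (fun ω => (V ω, Y1' ω)) = entropy μ (fun ω => (V ω, Y2 ω)) :=
      entropy_map_eq μ
        (⟨fun z => (z.1, !z.2), fun z => (z.1, !z.2),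
          fun z => by simp, fun z => by simp⟩ : B × Bool ≃ B × Bool) (fun ω => rfl)
    have eUY2' : entropy μ (fun ω => (U ω, Y2' ω)) = entropy μ (fun ω => (U ω, Y1 ω)) :=
      entropy_map_eq μ
        (⟨fun z => (z.1, !z.2), fun z => (z.1, !z.2),
          fun z => by simp, fun z => by simp⟩ : A × Bool ≃ A × Bool) (fun ω => rfl)
    have eVU : entropy μ (fun ω => (V ω, U ω)) = entropy μ (fun ω => (U ω, V ω)) :=
      entropy_map_eq μ (Equiv.prodComm A B) (fun ω => rfl)
    have eX'Y2' : entropy μ (fun ω => (X' ω, Y2' ω)) = entropy μ (fun ω => (X ω, Y1 ω)) :=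
      entropy_map_eq μ
        (⟨fun z => (!z.1, !z.2), fun z => (!z.1, !z.2),
          fun z => by simp, fun z => by simp⟩ : Bool × Bool ≃ Bool × Bool) (fun ω => rfl)
    rw [mutualInfo, mutualInfo, mutualInfo, mutualInfo, eY1', eY2', eX'e, eVY1', eUY2', eVU,
      eX'Y2'] at hcore
    rw [mutualInfo, mutualInfo, mutualInfo]
    refine le_trans ?_ (le_max_left (mutualInfo μ X Y1) (mutualInfo μ X Y2))
    rw [mutualInfo]
    linarith [hcore]
  · exact le_trans
      (core μ U V X Y1 Y2 hU hV hX hY1 hY2 hMarkov hBSSC ht)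
      (le_max_right (mutualInfo μ X Y1) (mutualInfo μ X Y2))
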